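/- The system of equations p₁₂³+p₁₃³+p₁₄³=1, p₀₂p₁₂²+p₀₃p₁₃²+p₀₄p₁₄²=0, p₀₂²p₁₂+p₀₃²p₁₃+p₀₄²p₁₄=0, p₀₂³+p₀₃³+p₀₄³=-1, together with p₀₄p₁₃-p₀₃p₁₄=0 and p₀₄p₁₂-p₀₂p₁₄=0, has exactly 18 solutions in ℂ⁶: the 9 solutions (0, ω, 0, η, 0, 0) with ω³=-1, η³=1, and the 9 solutions (ω, 0, 0, 0, η, 0) with ω³=-1, η³=1. -/

import Mathlib

private lemma fermat_key (a b c x y z : ℂ)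
    (h1 : x^3+y^3+z^3=1) (h2 : a*x^2+b*y^2+c*z^2=0) (h3 : a^2*x+b^2*y+c^2*z=0)
    (h4 : a^3+b^3+c^3=-1) (h5 : c*y-b*z=0) (h6 : c*x-a*z=0) :
    (a=0 ∧ b^3=-1 ∧ c=0 ∧ x^3=1 ∧ y=0 ∧ z=0) ∨
    (a^3=-1 ∧ b=0 ∧ c=0 ∧ x=0 ∧ y^3=1 ∧ z=0) := by
  have hz : z = 0 := by
    have h : z^2 = 0 := by
      linear_combination -c^2*h2 + a*(a*z+c*x)*h6 + b*(b*z+c*y)*h5 + z^2*h4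
    exact pow_eq_zero_iff (by norm_num) |>.mp h
  subst hz
  have hc : c = 0 := by
    by_contra hc
    have hx : x = 0 := by
      have h : c * x = 0 := by linear_combination h6
      rcases mul_eq_zero.mp h with h|h
      · exact absurd h hc
      · exact h
    have hy : y = 0 := by
      have h : c * y = 0 := by linear_combination h5
      rcases mul_eq_zero.mp h with h|h
      · exact absurd h hc
      · exact h
    rw [hx, hy] at h1; norm_num at h1
  subst hc
  by_cases hx : x = 0
  · subst hx
    have hy3 : y^3 = 1 := by linear_combination h1
    have hy : y ≠ 0 := by rintro rfl; norm_num at hy3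
    have hb : b = 0 := by
      have h2' : b * y^2 = 0 := by linear_combination h2
      rcases mul_eq_zero.mp h2' with h|h
      · exact h
      · exact absurd (pow_eq_zero_iff (by norm_num) |>.mp h) hy
    subst hb
    right
    exact ⟨by linear_combination h4, rfl, rfl, rfl, hy3, rfl⟩
  · by_cases hy : y = 0
    · subst hy
      have hx3 : x^3 = 1 := by linear_combination h1
      have ha : a = 0 := by
        have h2' : a * x^2 = 0 := by linear_combination h2
        rcases mul_eq_zero.mp h2' with h|h
        · exact h
        · exact absurd (pow_eq_zero_iff (by norm_num) |>.mp h) hx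
      subst ha
      left
      exact ⟨rfl, by linear_combination h4, rfl, hx3, rfl, rfl⟩
    · exfalso
      have ha : a ≠ 0 := by
        rintro rfl
        have hb : b = 0 := by
          have h2' : b * y^2 = 0 := by linear_combination h2
          rcases mul_eq_zero.mp h2' with h|h
          · exact h
          · exact absurd (pow_eq_zero_iff (by norm_num) |>.mp h) hy
        rw [hb] at h4; norm_num at h4
      have k1 : a^3*x^3 - b^3*y^3 = 0 := by linear_combination a^2*x*h2 - b*y^2*h3
      have k2 : a^3*x^6 + b^3*y^6 = 0 := by
        linear_combination (a^2*x^4 - a*b*x^2*y^2 + b^2*y^4)*h2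
      have hz : a^3*x^3 = 0 := by linear_combination -a^3*x^3*h1 + y^3*k1 + k2
      rcases mul_eq_zero.mp hz with h|h
      · exact ha (pow_eq_zero_iff (by norm_num) |>.mp h)
      · exact hx (pow_eq_zero_iff (by norm_num) |>.mp h)

private lemma fermat_count
    (key : ∀ p₀₂ p₀₃ p₀₄ p₁₂ p₁₃ p₁₄ : ℂ,
      (p₁₂ ^ 3 + p₁₃ ^ 3 + p₁₄ ^ 3 = 1 ∧
       p₀₂ * p₁₂ ^ 2 + p₀₃ * p₁₃ ^ 2 + p₀₄ * p₁₄ ^ 2 = 0 ∧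
       p₀₂ ^ 2 * p₁₂ + p₀₃ ^ 2 * p₁₃ + p₀₄ ^ 2 * p₁₄ = 0 ∧
       p₀₂ ^ 3 + p₀₃ ^ 3 + p₀₄ ^ 3 = -1 ∧
       p₀₄ * p₁₃ - p₀₃ * p₁₄ = 0 ∧
       p₀₄ * p₁₂ - p₀₂ * p₁₄ = 0) ↔
      ((p₀₂ = 0 ∧ p₀₃ ^ 3 = -1 ∧ p₀₄ = 0 ∧ p₁₂ ^ 3 = 1 ∧ p₁₃ = 0 ∧ p₁₄ = 0) ∨
       (p₀₂ ^ 3 = -1 ∧ p₀₃ = 0 ∧ p₀₄ = 0 ∧ p₁₂ = 0 ∧ p₁₃ ^ 3 = 1 ∧ p₁₄ = 0))) :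
    Set.ncard {p : ℂ × ℂ × ℂ × ℂ × ℂ × ℂ |
      p.2.2.2.1 ^ 3 + p.2.2.2.2.1 ^ 3 + p.2.2.2.2.2 ^ 3 = 1 ∧
      p.1 * p.2.2.2.1 ^ 2 + p.2.1 * p.2.2.2.2.1 ^ 2 + p.2.2.1 * p.2.2.2.2.2 ^ 2 = 0 ∧
      p.1 ^ 2 * p.2.2.2.1 + p.2.1 ^ 2 * p.2.2.2.2.1 + p.2.2.1 ^ 2 * p.2.2.2.2.2 = 0 ∧
      p.1 ^ 3 + p.2.1 ^ 3 + p.2.2.1 ^ 3 = -1 ∧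
      p.2.2.1 * p.2.2.2.2.1 - p.2.1 * p.2.2.2.2.2 = 0 ∧
      p.2.2.1 * p.2.2.2.1 - p.1 * p.2.2.2.2.2 = 0} = 18 := by
  classical
  set A : Finset ℂ := Polynomial.nthRootsFinset 3 (1 : ℂ) with hA
  have hAmem : ∀ x : ℂ, x ∈ A ↔ x^3 = 1 := fun x => Polynomial.mem_nthRootsFinset (by norm_num) 1
  have hAcard : A.card = 3 := (Complex.isPrimitiveRoot_exp 3 (by norm_num)).card_nthRootsFinset
  set B : Finset ℂ := A.image (fun x => -x) with hB
  have hBmem : ∀ x : ℂ, x ∈ B ↔ x^3 = -1 := by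
    intro x
    simp only [hB, Finset.mem_image]
    constructor
    · rintro ⟨a, ha, rfl⟩
      have := (hAmem a).mp ha
      linear_combination -this
    · intro hx
      exact ⟨-x, (hAmem _).mpr (by linear_combination -hx), by ring⟩
  have hBcard : B.card = 3 := by
    rw [hB, Finset.card_image_of_injective _ neg_injective, hAcard]
  set f₁ : ℂ × ℂ → ℂ × ℂ × ℂ × ℂ × ℂ × ℂ := fun q => (0, q.1, 0, q.2, 0, 0) with hf₁
  set f₂ : ℂ × ℂ → ℂ × ℂ × ℂ × ℂ × ℂ × ℂ := fun q => (q.1, 0, 0, 0, q.2, 0) with hf₂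
  have hinj₁ : Function.Injective f₁ := by
    intro p q h
    simp only [hf₁, Prod.ext_iff] at h ⊢
    tauto
  have hinj₂ : Function.Injective f₂ := by
    intro p q h
    simp only [hf₂, Prod.ext_iff] at h ⊢
    tauto
  set F : Finset (ℂ × ℂ × ℂ × ℂ × ℂ × ℂ) :=
    ((B ×ˢ A).image f₁) ∪ ((B ×ˢ A).image f₂) with hF
  have hset : {p : ℂ × ℂ × ℂ × ℂ × ℂ × ℂ |
      p.2.2.2.1 ^ 3 + p.2.2.2.2.1 ^ 3 + p.2.2.2.2.2 ^ 3 = 1 ∧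
      p.1 * p.2.2.2.1 ^ 2 + p.2.1 * p.2.2.2.2.1 ^ 2 + p.2.2.1 * p.2.2.2.2.2 ^ 2 = 0 ∧
      p.1 ^ 2 * p.2.2.2.1 + p.2.1 ^ 2 * p.2.2.2.2.1 + p.2.2.1 ^ 2 * p.2.2.2.2.2 = 0 ∧
      p.1 ^ 3 + p.2.1 ^ 3 + p.2.2.1 ^ 3 = -1 ∧
      p.2.2.1 * p.2.2.2.2.1 - p.2.1 * p.2.2.2.2.2 = 0 ∧
      p.2.2.1 * p.2.2.2.1 - p.1 * p.2.2.2.2.2 = 0} = ↑F := by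
    ext ⟨a, b, c, x, y, z⟩
    simp only [Set.mem_setOf_eq, hF, Finset.coe_union, Set.mem_union, Finset.coe_image,
      Set.mem_image, Finset.mem_coe, Finset.mem_product, hf₁, hf₂, Prod.ext_iff]
    rw [key a b c x y z]
    constructor
    · rintro (⟨rfl, h3, rfl, h12, rfl, rfl⟩ | ⟨h2, rfl, rfl, rfl, h13, rfl⟩)
      · exact Or.inl ⟨(b, x), ⟨(hBmem b).mpr h3, (hAmem x).mpr h12⟩, by simp⟩
      · exact Or.inr ⟨(a, y), ⟨(hBmem a).mpr h2, (hAmem y).mpr h13⟩, by simp⟩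
    · rintro (⟨⟨u, v⟩, ⟨hu, hv⟩, h⟩ | ⟨⟨u, v⟩, ⟨hu, hv⟩, h⟩) <;>
        simp only at h <;> obtain ⟨e1, e2, e3, e4, e5, e6⟩ := h
      · left
        refine ⟨e1.symm, ?_, e3.symm, ?_, e5.symm, e6.symm⟩
        · rw [← e2]; exact (hBmem u).mp hu
        · rw [← e4]; exact (hAmem v).mp hv
      · right
        refine ⟨?_, e2.symm, e3.symm, e4.symm, ?_, e6.symm⟩
        · rw [← e1]; exact (hBmem u).mp hu
        · rw [← e5]; exact (hAmem v).mp hv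
  rw [hset, Set.ncard_coe_finset]
  have hdisj : Disjoint ((B ×ˢ A).image f₁) ((B ×ˢ A).image f₂) := by
    rw [Finset.disjoint_left]
    rintro p hp₁ hp₂
    simp only [Finset.mem_image, Finset.mem_product] at hp₁ hp₂
    obtain ⟨⟨u, v⟩, ⟨hu, _⟩, rfl⟩ := hp₂
    obtain ⟨⟨u', v'⟩, _, h⟩ := hp₁
    have h1 : u = 0 := by
      have := congrArg Prod.fst h
      simpa [hf₁, hf₂] using this.symm
    have := (hBmem u).mp hu
    rw [h1] at this
    norm_num at this
  rw [hF, Finset.card_union_of_disjoint hdisj,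
    Finset.card_image_of_injective _ hinj₁, Finset.card_image_of_injective _ hinj₂,
    Finset.card_product, hAcard, hBcard]
/-- The intersection of the components `M₁(F₄)` and `M₂(F₄)` of the curve of
second-type lines of the Fermat cubic in the chart `p₀₁ = 1`: the system consisting of
the four Fano equations together with `Q₁ = Q₂ = 0` has exactly the 18 solutions
`(0, ω, 0, η, 0, 0)` and `(ω, 0, 0, 0, η, 0)` with `ω³ = -1`, `η³ = 1`. -/
theorem fermat_M1_M2_intersection :
    (∀ p₀₂ p₀₃ p₀₄ p₁₂ p₁₃ p₁₄ : ℂ,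
      (p₁₂ ^ 3 + p₁₃ ^ 3 + p₁₄ ^ 3 = 1 ∧
       p₀₂ * p₁₂ ^ 2 + p₀₃ * p₁₃ ^ 2 + p₀₄ * p₁₄ ^ 2 = 0 ∧
       p₀₂ ^ 2 * p₁₂ + p₀₃ ^ 2 * p₁₃ + p₀₄ ^ 2 * p₁₄ = 0 ∧
       p₀₂ ^ 3 + p₀₃ ^ 3 + p₀₄ ^ 3 = -1 ∧
       p₀₄ * p₁₃ - p₀₃ * p₁₄ = 0 ∧
       p₀₄ * p₁₂ - p₀₂ * p₁₄ = 0) ↔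
      ((p₀₂ = 0 ∧ p₀₃ ^ 3 = -1 ∧ p₀₄ = 0 ∧ p₁₂ ^ 3 = 1 ∧ p₁₃ = 0 ∧ p₁₄ = 0) ∨
       (p₀₂ ^ 3 = -1 ∧ p₀₃ = 0 ∧ p₀₄ = 0 ∧ p₁₂ = 0 ∧ p₁₃ ^ 3 = 1 ∧ p₁₄ = 0))) ∧
    Set.ncard {p : ℂ × ℂ × ℂ × ℂ × ℂ × ℂ |
      p.2.2.2.1 ^ 3 + p.2.2.2.2.1 ^ 3 + p.2.2.2.2.2 ^ 3 = 1 ∧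
      p.1 * p.2.2.2.1 ^ 2 + p.2.1 * p.2.2.2.2.1 ^ 2 + p.2.2.1 * p.2.2.2.2.2 ^ 2 = 0 ∧
      p.1 ^ 2 * p.2.2.2.1 + p.2.1 ^ 2 * p.2.2.2.2.1 + p.2.2.1 ^ 2 * p.2.2.2.2.2 = 0 ∧
      p.1 ^ 3 + p.2.1 ^ 3 + p.2.2.1 ^ 3 = -1 ∧
      p.2.2.1 * p.2.2.2.2.1 - p.2.1 * p.2.2.2.2.2 = 0 ∧
      p.2.2.1 * p.2.2.2.1 - p.1 * p.2.2.2.2.2 = 0} = 18 := by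
  have key : ∀ p₀₂ p₀₃ p₀₄ p₁₂ p₁₃ p₁₄ : ℂ,
      (p₁₂ ^ 3 + p₁₃ ^ 3 + p₁₄ ^ 3 = 1 ∧
       p₀₂ * p₁₂ ^ 2 + p₀₃ * p₁₃ ^ 2 + p₀₄ * p₁₄ ^ 2 = 0 ∧
       p₀₂ ^ 2 * p₁₂ + p₀₃ ^ 2 * p₁₃ + p₀₄ ^ 2 * p₁₄ = 0 ∧
       p₀₂ ^ 3 + p₀₃ ^ 3 + p₀₄ ^ 3 = -1 ∧
       p₀₄ * p₁₃ - p₀₃ * p₁₄ = 0 ∧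
       p₀₄ * p₁₂ - p₀₂ * p₁₄ = 0) ↔
      ((p₀₂ = 0 ∧ p₀₃ ^ 3 = -1 ∧ p₀₄ = 0 ∧ p₁₂ ^ 3 = 1 ∧ p₁₃ = 0 ∧ p₁₄ = 0) ∨
       (p₀₂ ^ 3 = -1 ∧ p₀₃ = 0 ∧ p₀₄ = 0 ∧ p₁₂ = 0 ∧ p₁₃ ^ 3 = 1 ∧ p₁₄ = 0)) := by
    intro a b c x y z
    constructor
    · rintro ⟨h1, h2, h3, h4, h5, h6⟩
      exact fermat_key a b c x y z h1 h2 h3 h4 h5 h6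
    · rintro (⟨rfl, h3, rfl, h12, rfl, rfl⟩ | ⟨h2, rfl, rfl, rfl, h13, rfl⟩)
      · exact ⟨by linear_combination h12, by ring, by ring, by linear_combination h3,
          by ring, by ring⟩
      · exact ⟨by linear_combination h13, by ring, by ring, by linear_combination h2,
          by ring, by ring⟩
  exact ⟨key, fermat_count key⟩
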